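/- arXiv:1412.4384 — 2 statements merged into one kernel-verified Lean document; each statement's English description precedes it below -/
import Mathlib

section
/- For every λ > 0 and every x ∈ ℝ, ∫₀^∞ √(λ/(4πr)) · exp(−λx²/(4r)) · exp(−r) dr = (√λ/2) · exp(−√λ·|x|). In other words, if x | (r, λ) ~ N(0, 2r/λ) and r ~ Exp(1), then x | λ ~ Laplace(0, √λ). -/
open Real Set MeasureTheory

private lemma phi_hasDeriv (a : ℝ) {t : ℝ} (ht : 0 < t) :
    HasDerivAt (fun t : ℝ => t - a / t) (1 + a / t ^ 2) t := by
  have h1 : HasDerivAt (fun t : ℝ => a / t) (a * -(t ^ 2)⁻¹) t := by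
    simpa [div_eq_mul_inv] using (hasDerivAt_inv ht.ne').const_mul a
  have h2 := (hasDerivAt_id t).sub h1
  convert h2 using 1
  exacts [rfl, rfl, rfl, by ring]

private lemma phi_injOn (a : ℝ) (ha : 0 < a) :
    InjOn (fun t : ℝ => t - a / t) (Ioi 0) := by
  intro s hs t ht h
  simp only [mem_Ioi] at hs ht
  simp only at h
  have h' : (s - t) * (s * t + a) = 0 := by
    have hs0 : s ≠ 0 := hs.ne'
    have ht0 : t ≠ 0 := ht.ne'
    field_simp at h
    nlinarith [h]
  have hpos : s * t + a > 0 := by nlinarith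
  have := mul_eq_zero.mp h'
  rcases this with h0 | h0
  · linarith
  · linarith

private lemma phi_image (a : ℝ) (ha : 0 < a) :
    (fun t : ℝ => t - a / t) '' Ioi 0 = univ := by
  apply eq_univ_of_forall
  intro u
  set s := Real.sqrt (u ^ 2 + 4 * a) with hs
  have hs2 : s ^ 2 = u ^ 2 + 4 * a := Real.sq_sqrt (by positivity)
  have habs : |u| < s := by
    rw [hs, ← Real.sqrt_sq_eq_abs]
    exact Real.sqrt_lt_sqrt (sq_nonneg u) (by linarith)
  have ht : 0 < (u + s) / 2 := by
    have := neg_abs_le u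
    linarith
  refine ⟨(u + s) / 2, mem_Ioi.mpr ht, ?_⟩
  simp only
  have hne : u + s ≠ 0 := by
    intro h0
    rw [show u + s = ((u + s) / 2) * 2 by ring] at h0
    exact ht.ne' (by linarith [mul_eq_zero.mp h0])
  have hne' : u + s ≠ 0 := hne
  field_simp
  nlinarith [hs2]

private lemma inv_map_image (a : ℝ) (ha : 0 < a) :
    (fun t : ℝ => a / t) '' Ioi 0 = Ioi 0 := by
  ext y
  constructor
  · rintro ⟨t, ht, rfl⟩
    exact mem_Ioi.mpr (div_pos ha (mem_Ioi.mp ht))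
  · intro hy
    exact ⟨a / y, mem_Ioi.mpr (div_pos ha (mem_Ioi.mp hy)), by
      field_simp⟩

private lemma integrable_core (a : ℝ) :
    IntegrableOn (fun t : ℝ => Real.exp (-(t - a / t) ^ 2)) (Ioi 0) := by
  have hcont : ContinuousOn (fun t : ℝ => Real.exp (-(t - a / t) ^ 2)) (Ioi 0) := by
    apply Real.continuous_exp.comp_continuousOn
    apply ContinuousOn.neg
    apply ContinuousOn.pow
    exact continuousOn_id.sub (continuousOn_const.div continuousOn_id
      (fun t ht => (mem_Ioi.mp ht).ne'))
  have hbd : Integrable (fun t : ℝ => Real.exp (2 * a) * Real.exp (-1 * t ^ 2))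
      (volume.restrict (Ioi 0)) :=
    ((integrable_exp_neg_mul_sq one_pos).restrict).const_mul _
  apply Integrable.mono' hbd (hcont.aestronglyMeasurable measurableSet_Ioi)
  filter_upwards [ae_restrict_mem measurableSet_Ioi] with t ht
  rw [Real.norm_eq_abs, Real.abs_exp, ← Real.exp_add]
  apply Real.exp_le_exp.mpr
  have htne : t ≠ 0 := (mem_Ioi.mp ht).ne'
  have hcancel : a / t * t = a := div_mul_cancel₀ a htne
  nlinarith [sq_nonneg (a / t)]

private lemma glasser (a : ℝ) (ha : 0 < a) :
    ∫ t in Ioi (0 : ℝ), Real.exp (-(t - a / t) ^ 2) = Real.sqrt π / 2 := by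
  have hφ' : ∀ t ∈ Ioi (0 : ℝ),
      HasDerivWithinAt (fun t : ℝ => t - a / t) (1 + a / t ^ 2) (Ioi 0) t :=
    fun t ht => (phi_hasDeriv a (mem_Ioi.mp ht)).hasDerivWithinAt
  have hψ' : ∀ t ∈ Ioi (0 : ℝ),
      HasDerivWithinAt (fun t : ℝ => a / t) (a * -(t ^ 2)⁻¹) (Ioi 0) t := by
    intro t ht
    exact (by simpa [div_eq_mul_inv] using
      (hasDerivAt_inv (mem_Ioi.mp ht).ne').const_mul a : HasDerivAt _ _ t).hasDerivWithinAt
  have hψinj : InjOn (fun t : ℝ => a / t) (Ioi 0) := by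
    intro s hs t ht h
    simp only at h
    have hs' : s ≠ 0 := (mem_Ioi.mp hs).ne'
    have ht' : t ≠ 0 := (mem_Ioi.mp ht).ne'
    field_simp at h
    exact h.symm
  -- step 2 : J = ∫ (a/t²) e^{-(t-a/t)²}
  have step2 : ∫ t in Ioi (0 : ℝ), Real.exp (-(t - a / t) ^ 2)
      = ∫ t in Ioi (0 : ℝ), a / t ^ 2 * Real.exp (-(t - a / t) ^ 2) := by
    have := integral_image_eq_integral_abs_deriv_smul measurableSet_Ioi hψ' hψinj
      (fun u => Real.exp (-(u - a / u) ^ 2))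
    rw [inv_map_image a ha] at this
    rw [this]
    apply setIntegral_congr_fun measurableSet_Ioi
    intro t ht
    have ht' : (0 : ℝ) < t := mem_Ioi.mp ht
    have h1 : a / (a / t) = t := by field_simp
    have h2 : |a * -(t ^ 2)⁻¹| = a / t ^ 2 := by
      rw [mul_neg, abs_neg, abs_of_nonneg (by positivity : (0:ℝ) ≤ a * (t ^ 2)⁻¹),
        ← div_eq_mul_inv]
    simp only [smul_eq_mul, h1, h2]
    congr 2
    ring
  -- integrability of the second integrand
  have hint2 : IntegrableOn (fun t : ℝ => a / t ^ 2 * Real.exp (-(t - a / t) ^ 2)) (Ioi 0) := by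
    have := (integrableOn_image_iff_integrableOn_abs_deriv_smul measurableSet_Ioi hψ' hψinj
      (fun u => Real.exp (-(u - a / u) ^ 2))).mp (by rw [inv_map_image a ha]; exact integrable_core a)
    apply this.congr_fun _ measurableSet_Ioi
    intro t ht
    have ht' : (0 : ℝ) < t := mem_Ioi.mp ht
    have h1 : a / (a / t) = t := by field_simp
    have h2 : |a * -(t ^ 2)⁻¹| = a / t ^ 2 := by
      rw [mul_neg, abs_neg, abs_of_nonneg (by positivity : (0:ℝ) ≤ a * (t ^ 2)⁻¹),
        ← div_eq_mul_inv]
    simp only [smul_eq_mul, h1, h2]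
    congr 2
    ring
  -- step 3 : √π = ∫ (1 + a/t²) e^{-(t-a/t)²}
  have step3 : Real.sqrt π = ∫ t in Ioi (0 : ℝ),
      (1 + a / t ^ 2) * Real.exp (-(t - a / t) ^ 2) := by
    have h := integral_image_eq_integral_abs_deriv_smul measurableSet_Ioi hφ' (phi_injOn a ha)
      (fun u => Real.exp (-u ^ 2))
    rw [phi_image a ha, Measure.restrict_univ] at h
    have hg : (∫ x : ℝ, Real.exp (-x ^ 2)) = Real.sqrt π := by
      simpa using integral_gaussian 1
    rw [← hg, h]
    apply setIntegral_congr_fun measurableSet_Ioi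
    intro t ht
    have ht' : (0 : ℝ) < t := mem_Ioi.mp ht
    have : |1 + a / t ^ 2| = 1 + a / t ^ 2 := abs_of_pos (by positivity)
    simp [this]
  have hsplit : ∫ t in Ioi (0 : ℝ), (1 + a / t ^ 2) * Real.exp (-(t - a / t) ^ 2)
      = (∫ t in Ioi (0 : ℝ), Real.exp (-(t - a / t) ^ 2))
        + ∫ t in Ioi (0 : ℝ), a / t ^ 2 * Real.exp (-(t - a / t) ^ 2) := by
    rw [← integral_add (integrable_core a) hint2]
    apply setIntegral_congr_fun measurableSet_Ioi
    intro t _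
    ring
  rw [hsplit, ← step2] at step3
  linarith [step3]

private lemma gauss_mix (a : ℝ) (ha : 0 ≤ a) :
    ∫ t in Ioi (0 : ℝ), Real.exp (-a ^ 2 / t ^ 2) * Real.exp (-t ^ 2)
      = Real.sqrt π / 2 * Real.exp (-(2 * a)) := by
  rcases eq_or_lt_of_le ha with rfl | ha'
  · simp only [ne_eq, OfNat.ofNat_ne_zero, not_false_eq_true, zero_pow, neg_zero, zero_div,
      Real.exp_zero, one_mul, mul_zero]
    simpa using integral_gaussian_Ioi 1
  · have hrw : ∀ t ∈ Ioi (0 : ℝ),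
        Real.exp (-a ^ 2 / t ^ 2) * Real.exp (-t ^ 2)
          = Real.exp (-(2 * a)) * Real.exp (-(t - a / t) ^ 2) := by
      intro t ht
      have ht' : (0 : ℝ) < t := mem_Ioi.mp ht
      rw [← Real.exp_add, ← Real.exp_add]
      congr 1
      have : a / t * t = a := div_mul_cancel₀ a ht'.ne'
      field_simp
      ring
    rw [setIntegral_congr_fun measurableSet_Ioi hrw, MeasureTheory.integral_const_mul, glasser a ha']
    ring

/-- Gaussian scale mixture representation of the Laplace prior:
`∫₀^∞ √(λ/(4πr)) exp(−λx²/(4r)) exp(−r) dr = (√λ/2) exp(−√λ |x|)`. -/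
theorem stmt_2 (l : ℝ) (hl : 0 < l) (x : ℝ) :
    ∫ r in Ioi (0 : ℝ),
        Real.sqrt (l / (4 * π * r)) * Real.exp (-(l * x ^ 2) / (4 * r)) * Real.exp (-r)
      = Real.sqrt l / 2 * Real.exp (-(Real.sqrt l * |x|)) := by
  have hπ : (0 : ℝ) < π := Real.pi_pos
  set a : ℝ := Real.sqrt l * |x| / 2 with ha_def
  have ha : 0 ≤ a := by positivity
  have ha2 : a ^ 2 = l * x ^ 2 / 4 := by
    rw [ha_def]
    rw [div_pow, mul_pow, Real.sq_sqrt hl.le, sq_abs]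
    norm_num
  set c : ℝ := Real.sqrt l / (2 * Real.sqrt π) with hc_def
  -- rewrite the integrand
  have hrw : ∀ r ∈ Ioi (0 : ℝ),
      Real.sqrt (l / (4 * π * r)) * Real.exp (-(l * x ^ 2) / (4 * r)) * Real.exp (-r)
        = c * ((Real.sqrt r)⁻¹ * (Real.exp (-a ^ 2 / r) * Real.exp (-r))) := by
    intro r hr
    have hr' : (0 : ℝ) < r := mem_Ioi.mp hr
    have h4 : Real.sqrt 4 = 2 := by
      rw [show (4 : ℝ) = 2 ^ 2 by norm_num, Real.sqrt_sq (by norm_num : (0:ℝ) ≤ 2)]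
    have h1 : Real.sqrt (l / (4 * π * r)) = c * (Real.sqrt r)⁻¹ := by
      rw [Real.sqrt_div hl.le, Real.sqrt_mul (by positivity : (0:ℝ) ≤ 4 * π),
        Real.sqrt_mul (by norm_num : (0:ℝ) ≤ 4), h4, hc_def]
      have hsr : (0 : ℝ) < Real.sqrt r := Real.sqrt_pos.mpr hr'
      have hsπ : (0 : ℝ) < Real.sqrt π := Real.sqrt_pos.mpr hπ
      field_simp
    have h2 : -(l * x ^ 2) / (4 * r) = -a ^ 2 / r := by
      rw [ha2]; field_simp
    rw [h1, h2]
    ring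
  rw [setIntegral_congr_fun measurableSet_Ioi hrw, MeasureTheory.integral_const_mul]
  -- substitution r = t²
  have hsq' : ∀ t ∈ Ioi (0 : ℝ),
      HasDerivWithinAt (fun t : ℝ => t ^ 2) (2 * t) (Ioi 0) t := by
    intro t _
    simpa using (hasDerivAt_pow 2 t).hasDerivWithinAt
  have hsqinj : InjOn (fun t : ℝ => t ^ 2) (Ioi 0) := by
    intro s hs t ht h
    simp only at h
    have hs' : (0 : ℝ) < s := mem_Ioi.mp hs
    have ht' : (0 : ℝ) < t := mem_Ioi.mp ht
    nlinarith
  have hsqim : (fun t : ℝ => t ^ 2) '' Ioi 0 = Ioi 0 := by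
    ext y
    constructor
    · rintro ⟨t, ht, rfl⟩
      exact mem_Ioi.mpr (pow_pos (mem_Ioi.mp ht) 2)
    · intro hy
      have hy' : (0 : ℝ) < y := mem_Ioi.mp hy
      exact ⟨Real.sqrt y, mem_Ioi.mpr (Real.sqrt_pos.mpr hy'), Real.sq_sqrt hy'.le⟩
  have hsub := integral_image_eq_integral_abs_deriv_smul measurableSet_Ioi hsq' hsqinj
    (fun r => (Real.sqrt r)⁻¹ * (Real.exp (-a ^ 2 / r) * Real.exp (-r)))
  rw [hsqim] at hsub
  have hsub2 : ∫ t in Ioi (0 : ℝ),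
        |2 * t| • ((Real.sqrt (t ^ 2))⁻¹ * (Real.exp (-a ^ 2 / t ^ 2) * Real.exp (-t ^ 2)))
      = ∫ t in Ioi (0 : ℝ), 2 * (Real.exp (-a ^ 2 / t ^ 2) * Real.exp (-t ^ 2)) := by
    apply setIntegral_congr_fun measurableSet_Ioi
    intro t ht
    have ht' : (0 : ℝ) < t := mem_Ioi.mp ht
    have h1 : Real.sqrt (t ^ 2) = t := Real.sqrt_sq ht'.le
    have h2 : |2 * t| = 2 * t := abs_of_pos (by linarith)
    simp only [smul_eq_mul, h1, h2]
    field_simp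
  rw [hsub, hsub2, MeasureTheory.integral_const_mul, gauss_mix a ha]
  have hsπ : (0 : ℝ) < Real.sqrt π := Real.sqrt_pos.mpr hπ
  have h2a : 2 * a = Real.sqrt l * |x| := by rw [ha_def]; ring
  rw [h2a, hc_def]
  field_simp
end

section
/- For all real a > 0 and b ≥ 0, ∫₀^∞ x^{−1/2} · exp(−(ax + b/x)/2) dx = √(2π/a) · exp(−√(ab)). -/
open Real Set

open MeasureTheory

private lemma subst_sq (h : ℝ → ℝ) :
    ∫ x in Ioi (0:ℝ), h x = ∫ t in Ioi (0:ℝ), |2*t| • h (t^2) := by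
  have himg : (fun t : ℝ => t^2) '' Ioi 0 = Ioi 0 := by
    ext y; constructor
    · rintro ⟨t, ht, rfl⟩; exact pow_pos (mem_Ioi.1 ht) 2
    · intro hy; exact ⟨Real.sqrt y, Real.sqrt_pos.2 hy, Real.sq_sqrt (le_of_lt hy)⟩
  conv_lhs => rw [← himg]
  exact integral_image_eq_integral_abs_deriv_smul (f' := fun t => 2*t) measurableSet_Ioi
    (fun t ht => by simpa [mul_comm] using (hasDerivAt_pow 2 t).hasDerivWithinAt)
    (fun t (ht : t ∈ Ioi (0:ℝ)) s hs h => by nlinarith [mem_Ioi.1 ht, mem_Ioi.1 hs]) h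

set_option maxHeartbeats 1000000 in
/-- GIG normalizing integral for `p = 1/2`:
`∫₀^∞ x^{−1/2} exp(−(ax + b/x)/2) dx = √(2π/a) exp(−√(ab))`. -/
theorem stmt_5 (a b : ℝ) (ha : 0 < a) (hb : 0 ≤ b) :
    ∫ x in Ioi (0 : ℝ), x ^ (-(1 : ℝ) / 2) * Real.exp (-(a * x + b / x) / 2)
      = Real.sqrt (2 * π / a) * Real.exp (-Real.sqrt (a * b)) := by
  set sa := Real.sqrt a with hsa_def
  set sb := Real.sqrt b with hsb_def
  have hsa : 0 < sa := Real.sqrt_pos.2 ha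
  have hsa2 : sa^2 = a := Real.sq_sqrt ha.le
  have hsb2 : sb^2 = b := Real.sq_sqrt hb
  have hsb0 : 0 ≤ sb := Real.sqrt_nonneg b
  set K : ℝ → ℝ := fun t => Real.exp (-(a*t^2 + b/t^2)/2) with hK_def
  -- Step 1: LHS = 2 ∫ K
  have step1 : ∫ x in Ioi (0 : ℝ), x ^ (-(1 : ℝ) / 2) * Real.exp (-(a * x + b / x) / 2)
      = ∫ t in Ioi (0:ℝ), 2 * K t := by
    rw [subst_sq]
    refine setIntegral_congr_fun measurableSet_Ioi (fun t ht => ?_)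
    have ht0 : (0:ℝ) < t := ht
    have hrp : (t^2 : ℝ) ^ (-(1:ℝ)/2) = t⁻¹ := by
      rw [show (-(1:ℝ)/2) = -(1/2) by ring, Real.rpow_neg (sq_nonneg t),
        ← Real.sqrt_eq_rpow, Real.sqrt_sq ht0.le]
    simp only [smul_eq_mul, hrp, abs_of_pos (by positivity : (0:ℝ) < 2*t), hK_def]
    field_simp
  -- Integrability of K on Ioi 0
  have hKint : IntegrableOn K (Ioi 0) := by
    refine Integrable.integrableOn ?_
    refine Integrable.mono' (g := fun t => Real.exp (-(a/2)*t^2))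
      (integrable_exp_neg_mul_sq (by positivity)) ?_ ?_
    · apply Measurable.aestronglyMeasurable; fun_prop
    · refine Filter.Eventually.of_forall (fun t => ?_)
      rw [Real.norm_eq_abs, abs_of_pos (Real.exp_pos _)]
      apply Real.exp_le_exp.2
      have : 0 ≤ b / t^2 := div_nonneg hb (sq_nonneg t)
      nlinarith
  rcases eq_or_lt_of_le hb with hb0 | hbpos
  · -- b = 0 case
    subst hb0
    rw [step1]
    have heq : ∀ t ∈ Ioi (0:ℝ), 2 * K t = 2 * Real.exp (-(a/2)*t^2) := by
      intro t ht
      simp only [hK_def]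
      ring_nf
    rw [setIntegral_congr_fun measurableSet_Ioi heq, integral_const_mul,
      integral_gaussian_Ioi]
    rw [mul_zero, Real.sqrt_zero, neg_zero, Real.exp_zero, mul_one,
      show π / (a/2) = 2*π/a by ring]
    ring
  · -- b > 0 case
    have hsb : 0 < sb := Real.sqrt_pos.2 hbpos
    set c : ℝ := sb / sa with hc_def
    have hc : 0 < c := by positivity
    have hc2 : c^2 = b / a := by rw [hc_def, div_pow, hsa2, hsb2]
    -- inversion substitution t ↦ c / t
    have hinv_img : (fun t : ℝ => c / t) '' Ioi 0 = Ioi 0 := by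
      ext y; constructor
      · rintro ⟨t, ht, rfl⟩; exact div_pos hc ht
      · intro hy
        exact ⟨c / y, div_pos hc hy, by field_simp⟩
    have hinv_deriv : ∀ t ∈ Ioi (0:ℝ),
        HasDerivWithinAt (fun t : ℝ => c / t) (-(c/t^2)) (Ioi 0) t := by
      intro t ht
      have ht0 : (0:ℝ) < t := ht
      have := ((hasDerivAt_inv ht0.ne').const_mul c).hasDerivWithinAt (s := Ioi 0)
      simpa [div_eq_mul_inv, neg_div, mul_div_assoc] using this
    have hinv_inj : InjOn (fun t : ℝ => c / t) (Ioi 0) := by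
      intro t ht s hs h
      have ht0 : (0:ℝ) < t := ht
      have hs0 : (0:ℝ) < s := hs
      have h2 : c * s = c * t := (div_eq_div_iff ht0.ne' hs0.ne').1 h
      exact (mul_left_cancel₀ hc.ne' h2).symm
    have hKinv : ∀ t ∈ Ioi (0:ℝ), K (c / t) = K t := by
      intro t ht
      have ht0 : (0:ℝ) < t := ht
      simp only [hK_def]
      congr 1
      have h1 : a * (c/t)^2 = b / t^2 := by
        rw [div_pow, hc2]; field_simp; try ring
      have h2 : b / (c/t)^2 = a * t^2 := by
        rw [div_pow, hc2]
        field_simp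
        try ring
      rw [h1, h2]; ring
    have hrecip : ∫ t in Ioi (0:ℝ), (c/t^2) * K t = ∫ t in Ioi (0:ℝ), K t := by
      conv_rhs => rw [← hinv_img]
      rw [integral_image_eq_integral_abs_deriv_smul measurableSet_Ioi hinv_deriv hinv_inj K]
      refine setIntegral_congr_fun measurableSet_Ioi (fun t ht => ?_)
      have ht0 : (0:ℝ) < t := ht
      rw [smul_eq_mul, hKinv t ht, abs_neg, abs_of_pos (by positivity)]
    have hrecip_int : IntegrableOn (fun t => (c/t^2) * K t) (Ioi 0) := by
      have himg' : IntegrableOn K ((fun t : ℝ => c / t) '' Ioi 0) := by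
        rw [hinv_img]; exact hKint
      have := (integrableOn_image_iff_integrableOn_abs_deriv_smul measurableSet_Ioi
        hinv_deriv hinv_inj K).1 himg'
      refine this.congr_fun ?_ measurableSet_Ioi
      intro t ht
      have ht0 : (0:ℝ) < t := ht
      simp only [smul_eq_mul]
      rw [hKinv t ht, abs_neg, abs_of_pos (by positivity)]
    -- main substitution u = sa*t - sb/t
    set g : ℝ → ℝ := fun t => sa * t - sb / t with hg_def
    have hg_img : g '' Ioi 0 = univ := by
      ext y
      simp only [mem_univ, iff_true]
      set s := Real.sqrt (y^2 + 4*sa*sb) with hs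
      have hs2 : s^2 = y^2 + 4*sa*sb := Real.sq_sqrt (by nlinarith [sq_nonneg y])
      have hs0 : 0 ≤ s := Real.sqrt_nonneg _
      have hnum : 0 < y + s := by nlinarith [mul_pos hsa hsb]
      refine ⟨(y + s)/(2*sa), mem_Ioi.2 (by positivity), ?_⟩
      simp only [hg_def]
      have h2sa : (2*sa) ≠ 0 := by positivity
      field_simp
      nlinarith [hs2]
    have hg_deriv : ∀ t ∈ Ioi (0:ℝ),
        HasDerivWithinAt g (sa + sb/t^2) (Ioi 0) t := by
      intro t ht
      have ht0 : (0:ℝ) < t := ht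
      have := (((hasDerivAt_id t).const_mul sa).sub
        ((hasDerivAt_inv ht0.ne').const_mul sb)).hasDerivWithinAt (s := Ioi 0)
      simpa [hg_def, div_eq_mul_inv, mul_comm, sub_neg_eq_add, Pi.sub_def] using this
    have hg_inj : InjOn g (Ioi 0) := by
      intro t ht s hs h
      have ht0 : (0:ℝ) < t := ht
      have hs0 : (0:ℝ) < s := hs
      simp only [hg_def] at h
      have e1 : (sa*t - sb/t) * (t*s) = sa*t^2*s - sb*s := by
        field_simp
      have e2 : (sa*s - sb/s) * (t*s) = sa*s^2*t - sb*t := by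
        field_simp
      have h2 : sa*t^2*s - sb*s = sa*s^2*t - sb*t := by
        rw [← e1, ← e2]
        rw [h]
      rcases lt_trichotomy t s with hlt | heq | hgt
      · exfalso; nlinarith [h2, mul_pos (mul_pos hsa ht0) hs0]
      · exact heq
      · exfalso; nlinarith [h2, mul_pos (mul_pos hsa ht0) hs0]
    have hgauss : ∫ u : ℝ, Real.exp (-(1/2) * u^2) = Real.sqrt (2*π) := by
      rw [integral_gaussian, div_div_eq_mul_div, div_one]; ring_nf
    have hmain : Real.sqrt (2*π)
        = ∫ t in Ioi (0:ℝ), |sa + sb/t^2| • Real.exp (-(1/2) * (g t)^2) := by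
      rw [← hgauss, ← setIntegral_univ, ← hg_img,
        integral_image_eq_integral_abs_deriv_smul measurableSet_Ioi hg_deriv hg_inj]
    have hsab : sa * sb = Real.sqrt (a * b) := (Real.sqrt_mul ha.le b).symm
    have hpt : ∀ t ∈ Ioi (0:ℝ), |sa + sb/t^2| • Real.exp (-(1/2) * (g t)^2)
        = Real.exp (Real.sqrt (a*b)) * (sa * K t + sa * ((c/t^2) * K t)) := by
      intro t ht
      have ht0 : (0:ℝ) < t := ht
      have habs : |sa + sb/t^2| = sa + sb/t^2 := abs_of_pos (by positivity)
      have hgsq : -(1/2) * (g t)^2 = Real.sqrt (a*b) + (-(a*t^2 + b/t^2)/2) := by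
        simp only [hg_def]
        rw [← hsab, ← hsa2, ← hsb2]
        field_simp
        ring
      rw [smul_eq_mul, habs, hgsq, Real.exp_add]
      have hsac : sa * c = sb := by rw [hc_def]; field_simp
      simp only [hK_def]
      rw [← hsac]
      ring
    rw [setIntegral_congr_fun measurableSet_Ioi hpt] at hmain
    rw [integral_const_mul, integral_add (hKint.const_mul sa) (hrecip_int.const_mul sa),
      integral_const_mul, integral_const_mul, hrecip] at hmain
    -- conclude
    rw [step1, integral_const_mul]
    have hIK : ∫ t in Ioi (0:ℝ), K t
        = Real.sqrt (2*π) * Real.exp (-Real.sqrt (a*b)) / (2 * sa) := by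
      have hexp : Real.exp (Real.sqrt (a*b)) ≠ 0 := (Real.exp_pos _).ne'
      field_simp [Real.exp_neg] at hmain ⊢
      rw [Real.exp_neg, hmain]
      field_simp
      ring
    rw [hIK]
    have hfinal : Real.sqrt (2*π/a) = Real.sqrt (2*π) / sa := by
      rw [hsa_def, ← Real.sqrt_div (by positivity)]
    rw [hfinal]
    field_simp
end
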